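/- arXiv:1603.07815 — 3 statements merged into one kernel-verified Lean document; each statement's English description precedes it below -/
import Mathlib

section
/- Let P: G → K be a function between additive (abelian) groups, let H₁ and H₂ be subgroups of G, and let d₁, d₂ be integers. If P is a polynomial of degree <d₁ along H₁ and a polynomial of degree <d₂ along H₂, then P is a polynomial of degree <d₁+d₂−1 along the subgroup H₁+H₂. -/
/-- `P : G → K` is a polynomial of degree `< d` along the subgroup `H`, for a natural
number `d`: for `d = 0` this means `P` is identically zero, and for `d ≥ 1` it means
that for every `h ∈ H` there is a polynomial `P_h` of degree `< d - 1` along `H` with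
`P(x+h) = P(x) + P_h(x)` for all `x`. -/
def IsPolyDegNat {G K : Type*} [AddCommGroup G] [AddCommGroup K] (H : AddSubgroup G) :
    ℕ → (G → K) → Prop
  | 0, P => P = 0
  | d + 1, P => ∀ h ∈ H, ∃ Ph : G → K,
      IsPolyDegNat H d Ph ∧ ∀ x : G, P (x + h) = P x + Ph x

/-- `P : G → K` is a polynomial of degree `< d` along the subgroup `H`, for an integer
`d`: if `d ≤ 0` this means `P` is identically zero; if `d ≥ 1` it means that for every
`h ∈ H` there is a polynomial `P_h` of degree `< d - 1` along `H` with
`P(x+h) = P(x) + P_h(x)` for all `x`. -/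
def IsPolyDeg {G K : Type*} [AddCommGroup G] [AddCommGroup K] (H : AddSubgroup G)
    (d : ℤ) (P : G → K) : Prop :=
  if d ≤ 0 then P = 0 else IsPolyDegNat H d.toNat P

section Aux

variable {G K : Type*} [AddCommGroup G] [AddCommGroup K] (H : AddSubgroup G)

lemma polyNat_zero : ∀ d : ℕ, IsPolyDegNat H d (0 : G → K)
  | 0 => rfl
  | d + 1 => fun _ _ => ⟨0, polyNat_zero d, fun _ => by simp⟩

lemma polyNat_add : ∀ (d : ℕ) (P Q : G → K), IsPolyDegNat H d P → IsPolyDegNat H d Q →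
    IsPolyDegNat H d (fun x => P x + Q x)
  | 0, P, Q, hP, hQ => by subst hP; subst hQ; funext x; simp
  | d + 1, P, Q, hP, hQ => fun h hh => by
      obtain ⟨Ph, hPh, eP⟩ := hP h hh
      obtain ⟨Qh, hQh, eQ⟩ := hQ h hh
      exact ⟨fun x => Ph x + Qh x, polyNat_add d Ph Qh hPh hQh,
        fun x => by simp only [eP, eQ]; abel⟩

lemma polyNat_neg : ∀ (d : ℕ) (P : G → K), IsPolyDegNat H d P →
    IsPolyDegNat H d (fun x => -P x)
  | 0, P, hP => by subst hP; funext x; simp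
  | d + 1, P, hP => fun h hh => by
      obtain ⟨Ph, hPh, eP⟩ := hP h hh
      exact ⟨fun x => -Ph x, polyNat_neg d Ph hPh, fun x => by simp only [eP]; abel⟩

lemma polyNat_sub (d : ℕ) (P Q : G → K) (hP : IsPolyDegNat H d P)
    (hQ : IsPolyDegNat H d Q) : IsPolyDegNat H d (fun x => P x - Q x) := by
  have := polyNat_add H d P (fun x => -Q x) hP (polyNat_neg H d Q hQ)
  simpa [sub_eq_add_neg] using this

lemma polyNat_translate (g : G) : ∀ (d : ℕ) (P : G → K), IsPolyDegNat H d P →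
    IsPolyDegNat H d (fun x => P (x + g))
  | 0, P, hP => by subst hP; rfl
  | d + 1, P, hP => fun h hh => by
      obtain ⟨Ph, hPh, eP⟩ := hP h hh
      refine ⟨fun x => Ph (x + g), polyNat_translate g d Ph hPh, fun x => ?_⟩
      simp only
      rw [show x + h + g = x + g + h by abel, eP]

lemma polyNat_concat (H₁ H₂ : AddSubgroup G) (n : ℕ) :
    ∀ a b : ℕ, a + b = n → ∀ P : G → K, IsPolyDegNat H₁ (a + 1) P →
      IsPolyDegNat H₂ (b + 1) P → IsPolyDegNat (H₁ ⊔ H₂) (a + b + 1) P := by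
  induction n using Nat.strong_induction_on with
  | _ n ih =>
    intro a b hab P hP1 hP2 h hh
    rw [AddSubgroup.mem_sup] at hh
    obtain ⟨h₁, hh₁, h₂, hh₂, rfl⟩ := hh
    obtain ⟨Q, hQ1, hQe⟩ := hP1 h₁ hh₁
    obtain ⟨R, hR2, hRe⟩ := hP2 h₂ hh₂
    have hQeq : Q = fun x => P (x + h₁) - P x := funext fun x => by rw [hQe]; abel
    have hReq : R = fun x => P (x + h₂) - P x := funext fun x => by rw [hRe]; abel
    have hQ2 : IsPolyDegNat H₂ (b + 1) Q := by
      rw [hQeq]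
      exact polyNat_sub H₂ (b + 1) _ _ (polyNat_translate H₂ h₁ (b + 1) P hP2) hP2
    have hR1 : IsPolyDegNat H₁ (a + 1) R := by
      rw [hReq]
      exact polyNat_sub H₁ (a + 1) _ _ (polyNat_translate H₁ h₂ (a + 1) P hP1) hP1
    have hQsup : IsPolyDegNat (H₁ ⊔ H₂) (a + b) Q := by
      cases a with
      | zero => rw [show Q = 0 from hQ1]; exact polyNat_zero _ _
      | succ a' =>
          have := ih (a' + b) (by omega) a' b rfl Q hQ1 hQ2
          rw [show a' + 1 + b = a' + b + 1 by omega]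
          exact this
    have hRsup : IsPolyDegNat (H₁ ⊔ H₂) (a + b) R := by
      cases b with
      | zero => rw [show R = 0 from hR2]; simpa using polyNat_zero (H₁ ⊔ H₂) a
      | succ b' =>
          have := ih (a + b') (by omega) a b' rfl R hR1 hR2
          rw [show a + (b' + 1) = a + b' + 1 by omega]
          exact this
    refine ⟨fun x => Q (x + h₂) + R x,
      polyNat_add _ _ _ _ (polyNat_translate _ h₂ _ Q hQsup) hRsup, fun x => ?_⟩
    rw [show x + (h₁ + h₂) = x + h₂ + h₁ by abel, hQe (x + h₂), hRe x,
      add_assoc, add_comm (R x)]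

end Aux

/-- **Concatenation theorem for polynomials** (Proposition 1.2): if `P` is a polynomial
of degree `< d₁` along `H₁` and of degree `< d₂` along `H₂`, then `P` is a polynomial of
degree `< d₁ + d₂ - 1` along `H₁ + H₂`. -/
theorem concat_poly {G K : Type*} [AddCommGroup G] [AddCommGroup K]
    (P : G → K) (H₁ H₂ : AddSubgroup G) (d₁ d₂ : ℤ)
    (h₁ : IsPolyDeg H₁ d₁ P) (h₂ : IsPolyDeg H₂ d₂ P) :
    IsPolyDeg (H₁ ⊔ H₂) (d₁ + d₂ - 1) P := by
  unfold IsPolyDeg at *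
  by_cases hd1 : d₁ ≤ 0
  · rw [if_pos hd1] at h₁
    subst h₁
    split
    · rfl
    · exact polyNat_zero _ _
  by_cases hd2 : d₂ ≤ 0
  · rw [if_pos hd2] at h₂
    subst h₂
    split
    · rfl
    · exact polyNat_zero _ _
  rw [if_neg hd1] at h₁
  rw [if_neg hd2] at h₂
  rw [if_neg (show ¬ d₁ + d₂ - 1 ≤ 0 by omega)]
  have e1 : d₁.toNat = (d₁.toNat - 1) + 1 := by omega
  have e2 : d₂.toNat = (d₂.toNat - 1) + 1 := by omega
  have e3 : (d₁ + d₂ - 1).toNat = (d₁.toNat - 1) + (d₂.toNat - 1) + 1 := by omega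
  rw [e3]
  exact polyNat_concat H₁ H₂ _ _ _ rfl P (e1 ▸ h₁) (e2 ▸ h₂)
end

section
/- Let P: G → K be a function between additive (abelian) groups, let d₁, d₂ be non-negative integers, and let H_{1,1},…,H_{1,d₁}, H_{2,1},…,H_{2,d₂} be subgroups of G. If P has rank <(H_{1,i})_{1≤i≤d₁} and P has rank <(H_{2,j})_{1≤j≤d₂}, then P has rank <(H_{1,i}+H_{2,j})_{1≤i≤d₁, 1≤j≤d₂}, the d₁·d₂ subgroups H_{1,i}+H_{2,j} listed in lexicographic order of (i,j). -/
/-- `P : G → K` has rank `< (H₁,…,H_d)`, for a tuple of `d` subgroups of `G`: for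
`d = 0` this means `P` is identically zero, and for `d ≥ 1` it means that for every
index `i` and every `h ∈ H_i` there is a function `P_h` of rank
`< (H₁,…,H_{i-1},H_{i+1},…,H_d)` with `P(x+h) = P(x) + P_h(x)` for all `x`. -/
def IsRankLt {G K : Type*} [AddCommGroup G] [AddCommGroup K] :
    (d : ℕ) → (Fin d → AddSubgroup G) → (G → K) → Prop
  | 0, _, P => P = 0
  | d + 1, H, P => ∀ i : Fin (d + 1), ∀ h ∈ H i, ∃ Ph : G → K,
      IsRankLt d (fun j => H (i.succAbove j)) Ph ∧ ∀ x : G, P (x + h) = P x + Ph x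

private lemma enc_inj {b p p' q q' : ℕ} (hq : q < b) (hq' : q' < b)
    (h : p * b + q = p' * b + q') : p = p' ∧ q = q' := by
  have hb : 0 < b := Nat.lt_of_le_of_lt (Nat.zero_le q) hq
  have h1 : (p * b + q) / b = p := by
    rw [Nat.mul_comm, Nat.mul_add_div hb, Nat.div_eq_of_lt hq, Nat.add_zero]
  have h2 : (p' * b + q') / b = p' := by
    rw [Nat.mul_comm, Nat.mul_add_div hb, Nat.div_eq_of_lt hq', Nat.add_zero]
  have h3 : (p * b + q) % b = q := by
    rw [Nat.mul_comm, Nat.mul_add_mod, Nat.mod_eq_of_lt hq]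
  have h4 : (p' * b + q') % b = q' := by
    rw [Nat.mul_comm, Nat.mul_add_mod, Nat.mod_eq_of_lt hq']
  constructor
  · rw [← h1, ← h2, h]
  · rw [← h3, ← h4, h]

private lemma pair_lt {p q a b : ℕ} (hp : p < a) (hq : q < b) : p * b + q < a * b :=
  calc p * b + q < p * b + b := by omega
    _ = (p + 1) * b := by ring
    _ ≤ a * b := Nat.mul_le_mul_right b hp

lemma isRankLt_add {G K : Type*} [AddCommGroup G] [AddCommGroup K] :
    ∀ (d : ℕ) (H : Fin d → AddSubgroup G) (P Q : G → K),
      IsRankLt d H P → IsRankLt d H Q → IsRankLt d H (fun x => P x + Q x) := by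
  intro d
  induction d with
  | zero =>
    intro H P Q hP hQ
    subst hP; subst hQ
    show (fun x => (0 : G → K) x + (0 : G → K) x) = 0
    funext x; simp
  | succ d ih =>
    intro H P Q hP hQ i h hm
    obtain ⟨Ph, hPh1, hPh2⟩ := hP i h hm
    obtain ⟨Qh, hQh1, hQh2⟩ := hQ i h hm
    refine ⟨fun x => Ph x + Qh x, ih _ _ _ hPh1 hQh1, fun x => ?_⟩
    show P (x + h) + Q (x + h) = P x + Q x + (Ph x + Qh x)
    rw [hPh2 x, hQh2 x]; abel

lemma isRankLt_translate {G K : Type*} [AddCommGroup G] [AddCommGroup K] :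
    ∀ (d : ℕ) (H : Fin d → AddSubgroup G) (a : G) (P : G → K),
      IsRankLt d H P → IsRankLt d H (fun x => P (x + a)) := by
  intro d
  induction d with
  | zero =>
    intro H a P hP
    subst hP
    show (fun x => (0 : G → K) (x + a)) = 0
    funext x; simp
  | succ d ih =>
    intro H a P hP i h hm
    obtain ⟨Ph, hPh1, hPh2⟩ := hP i h hm
    refine ⟨fun x => Ph (x + a), ih _ _ _ hPh1, fun x => ?_⟩
    show P (x + h + a) = P (x + a) + Ph (x + a)
    rw [add_right_comm]; exact hPh2 (x + a)

lemma isRankLt_shift_sub {G K : Type*} [AddCommGroup G] [AddCommGroup K] :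
    ∀ (d : ℕ) (H : Fin d → AddSubgroup G) (h₀ : G) (P : G → K),
      IsRankLt d H P → IsRankLt d H (fun x => P (x + h₀) - P x) := by
  intro d
  induction d with
  | zero =>
    intro H h₀ P hP
    subst hP
    show (fun x => (0 : G → K) (x + h₀) - (0 : G → K) x) = 0
    funext x; simp
  | succ d ih =>
    intro H h₀ P hP i h hm
    obtain ⟨Ph, hPh1, hPh2⟩ := hP i h hm
    refine ⟨fun x => Ph (x + h₀) - Ph x, ih _ _ _ hPh1, fun x => ?_⟩
    show P (x + h + h₀) - P (x + h) = P (x + h₀) - P x + (Ph (x + h₀) - Ph x)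
    rw [add_right_comm, hPh2 (x + h₀), hPh2 x]; abel

lemma isRankLt_embed {G K : Type*} [AddCommGroup G] [AddCommGroup K] :
    ∀ (e d : ℕ) (H : Fin d → AddSubgroup G) (H' : Fin e → AddSubgroup G) (P : G → K)
      (f : Fin d → Fin e), Function.Injective f → (∀ i, H' (f i) ≤ H i) →
      IsRankLt d H P → IsRankLt e H' P := by
  intro e
  induction e with
  | zero =>
    intro d H H' P f hf hle hr
    match d, H, f, hle, hr with
    | 0, H, f, hle, hr => exact hr
    | d + 1, H, f, hle, hr => exact (f 0).elim0
  | succ e ih =>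
    intro d H H' P f hf hle hr i' h hm
    by_cases hc : ∃ i, f i = i'
    · obtain ⟨i, rfl⟩ := hc
      match d, H, f, hf, hle, hr, i, hm with
      | 0, H, f, hf, hle, hr, i, hm => exact i.elim0
      | d + 1, H, f, hf, hle, hr, i, hm =>
        obtain ⟨Ph, hPh, hP⟩ := hr i h (hle i hm)
        have hex : ∀ j : Fin d, ∃ k, (f i).succAbove k = f (i.succAbove j) := by
          intro j
          exact Fin.exists_succAbove_eq (fun hh => Fin.succAbove_ne i j (hf hh))
        choose f' hf' using hex
        refine ⟨Ph, ih d (fun j => H (i.succAbove j))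
          (fun k => H' ((f i).succAbove k)) Ph f' ?_ ?_ hPh, hP⟩
        · intro a b hab
          have h5 : f (i.succAbove a) = f (i.succAbove b) := by
            rw [← hf' a, ← hf' b, hab]
          exact Fin.succAbove_right_injective (hf h5)
        · intro j
          show H' ((f i).succAbove (f' j)) ≤ H (i.succAbove j)
          rw [hf' j]
          exact hle (i.succAbove j)
    · push_neg at hc
      have hex : ∀ j : Fin d, ∃ k, i'.succAbove k = f j :=
        fun j => Fin.exists_succAbove_eq (hc j)
      choose f'' hf'' using hex
      refine ⟨fun x => P (x + h) - P x,
        ih d H (fun k => H' (i'.succAbove k)) _ f'' ?_ ?_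
          (isRankLt_shift_sub d H h P hr),
        fun x => by show P (x + h) = P x + (P (x + h) - P x); abel⟩
      · intro a b hab
        apply hf
        rw [← hf'' a, ← hf'' b, hab]
      · intro j
        show H' (i'.succAbove (f'' j)) ≤ H j
        rw [hf'' j]
        exact hle j

theorem concat_aux {G K : Type*} [AddCommGroup G] [AddCommGroup K]
    (d₁ d₂ e : ℕ) (A : Fin d₁ → AddSubgroup G) (B : Fin d₂ → AddSubgroup G)
    (H : Fin e → AddSubgroup G) (P : G → K)
    (he : e = d₁ * d₂)
    (hH : ∀ k : Fin e, ∃ p : Fin d₁, ∃ q : Fin d₂,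
      (k : ℕ) = p.1 * d₂ + q.1 ∧ H k = A p ⊔ B q)
    (h₁ : IsRankLt d₁ A P) (h₂ : IsRankLt d₂ B P) :
    IsRankLt e H P := by
  cases e with
  | zero =>
    rcases Nat.mul_eq_zero.mp he.symm with h0 | h0
    · subst h0; exact h₁
    · subst h0; exact h₂
  | succ m =>
    have hd₁ : 0 < d₁ := by
      rcases Nat.eq_zero_or_pos d₁ with rfl | h0
      · simp at he
      · exact h0
    have hd₂ : 0 < d₂ := by
      rcases Nat.eq_zero_or_pos d₂ with rfl | h0
      · simp at he
      · exact h0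
    obtain ⟨a, rfl⟩ : ∃ a, d₁ = a + 1 := ⟨d₁ - 1, by omega⟩
    obtain ⟨b, rfl⟩ : ∃ b, d₂ = b + 1 := ⟨d₂ - 1, by omega⟩
    intro i h hm
    obtain ⟨p, q, hi, hHi⟩ := hH i
    rw [hHi] at hm
    obtain ⟨y, hy, z, hz, hyz⟩ := AddSubgroup.mem_sup.mp hm
    obtain ⟨Py, hPyR, hPy⟩ := h₁ p y hy
    obtain ⟨Qz, hQzR, hQz⟩ := h₂ q z hz
    have hPyB : IsRankLt (b + 1) B Py := by
      have hPe : Py = fun x => P (x + y) - P x := funext fun x => by rw [hPy x]; abel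
      rw [hPe]; exact isRankLt_shift_sub _ _ y P h₂
    have hQzA : IsRankLt (a + 1) A Qz := by
      have hQe : Qz = fun x => P (x + z) - P x := funext fun x => by rw [hQz x]; abel
      rw [hQe]; exact isRankLt_shift_sub _ _ z P h₁
    have hb1 : 0 < b + 1 := Nat.succ_pos b
    have pf₁ : ∀ l : Fin (a * (b + 1)), l.1 / (b + 1) < a :=
      fun l => Nat.div_lt_of_lt_mul (Nat.lt_of_lt_of_eq l.2 (Nat.mul_comm a (b + 1)))
    -- first recursive call
    have R₁ : IsRankLt (a * (b + 1))
        (fun l : Fin (a * (b + 1)) =>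
          A (p.succAbove ⟨l.1 / (b + 1), pf₁ l⟩) ⊔
          B ⟨l.1 % (b + 1), Nat.mod_lt _ hb1⟩) Py := by
      apply concat_aux a (b + 1) (a * (b + 1)) (fun j => A (p.succAbove j)) B _ Py rfl ?_
        hPyR hPyB
      intro l
      refine ⟨⟨l.1 / (b + 1), pf₁ l⟩, ⟨l.1 % (b + 1), Nat.mod_lt _ hb1⟩, ?_, rfl⟩
      show (l : ℕ) = l.1 / (b + 1) * (b + 1) + l.1 % (b + 1)
      rw [Nat.mul_comm (l.1 / (b + 1)) (b + 1)]
      exact (Nat.div_add_mod _ _).symm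
    have hex₁ : ∀ l : Fin (a * (b + 1)), ∃ k : Fin m,
        ((i.succAbove k : Fin (m + 1)) : ℕ) =
          (p.succAbove ⟨l.1 / (b + 1), pf₁ l⟩).1 * (b + 1) + l.1 % (b + 1) := by
      intro l
      have hlt : (p.succAbove ⟨l.1 / (b + 1), pf₁ l⟩).1 * (b + 1) + l.1 % (b + 1) < m + 1 := by
        rw [he]; exact pair_lt (Fin.is_lt _) (Nat.mod_lt _ hb1)
      have hne : (⟨_, hlt⟩ : Fin (m + 1)) ≠ i := by
        intro heq
        have h5 : (p.succAbove ⟨l.1 / (b + 1), pf₁ l⟩).1 * (b + 1) + l.1 % (b + 1)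
            = p.1 * (b + 1) + q.1 := by
          rw [← hi]; exact congrArg Fin.val heq
        exact Fin.succAbove_ne p _
          (Fin.ext (enc_inj (Nat.mod_lt _ hb1) q.2 h5).1)
      obtain ⟨k, hk⟩ := Fin.exists_succAbove_eq hne
      exact ⟨k, by rw [hk]⟩
    choose f₁ hf₁ using hex₁
    have inj₁ : Function.Injective f₁ := by
      intro l l' hll
      have h5 : ((i.succAbove (f₁ l) : Fin (m + 1)) : ℕ) = i.succAbove (f₁ l') := by rw [hll]
      rw [hf₁ l, hf₁ l'] at h5
      obtain ⟨h6, h7⟩ := enc_inj (Nat.mod_lt _ hb1) (Nat.mod_lt _ hb1) h5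
      have h8 : (⟨l.1 / (b + 1), pf₁ l⟩ : Fin a) = ⟨l'.1 / (b + 1), pf₁ l'⟩ :=
        Fin.succAbove_right_injective (Fin.ext h6)
      have h9 : l.1 / (b + 1) = l'.1 / (b + 1) := congrArg Fin.val h8
      apply Fin.ext
      calc l.1 = (b + 1) * (l.1 / (b + 1)) + l.1 % (b + 1) := (Nat.div_add_mod _ _).symm
        _ = (b + 1) * (l'.1 / (b + 1)) + l'.1 % (b + 1) := by rw [h9, h7]
        _ = l'.1 := Nat.div_add_mod _ _
    have E₁ : IsRankLt m (fun j => H (i.succAbove j)) Py := by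
      apply isRankLt_embed m (a * (b + 1)) _ _ Py f₁ inj₁ ?_ R₁
      intro l
      show H (i.succAbove (f₁ l)) ≤
        A (p.succAbove ⟨l.1 / (b + 1), pf₁ l⟩) ⊔ B ⟨l.1 % (b + 1), Nat.mod_lt _ hb1⟩
      obtain ⟨p₂, q₂, hk1, hk2⟩ := hH (i.succAbove (f₁ l))
      have h5 : p₂.1 * (b + 1) + q₂.1 =
          (p.succAbove ⟨l.1 / (b + 1), pf₁ l⟩).1 * (b + 1) + l.1 % (b + 1) := by
        rw [← hk1]; exact hf₁ l
      obtain ⟨h6, h7⟩ := enc_inj q₂.2 (Nat.mod_lt _ hb1) h5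
      rw [hk2, show p₂ = p.succAbove ⟨l.1 / (b + 1), pf₁ l⟩ from Fin.ext h6,
        show q₂ = (⟨l.1 % (b + 1), Nat.mod_lt _ hb1⟩ : Fin (b + 1)) from Fin.ext h7]
    -- second recursive call
    have pf₂ : ∀ l : Fin ((a + 1) * b), l.1 / b < a + 1 :=
      fun l => Nat.div_lt_of_lt_mul (Nat.lt_of_lt_of_eq l.2 (Nat.mul_comm (a + 1) b))
    have pfb : ∀ _ : Fin ((a + 1) * b), 0 < b := by
      intro l
      rcases Nat.eq_zero_or_pos b with h0 | h0
      · exact absurd l.2 (by simp [h0])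
      · exact h0
    have R₂ : IsRankLt ((a + 1) * b)
        (fun l : Fin ((a + 1) * b) =>
          A ⟨l.1 / b, pf₂ l⟩ ⊔ B (q.succAbove ⟨l.1 % b, Nat.mod_lt _ (pfb l)⟩)) Qz := by
      apply concat_aux (a + 1) b ((a + 1) * b) A (fun j => B (q.succAbove j)) _ Qz rfl ?_
        hQzA hQzR
      intro l
      refine ⟨⟨l.1 / b, pf₂ l⟩, ⟨l.1 % b, Nat.mod_lt _ (pfb l)⟩, ?_, rfl⟩
      show (l : ℕ) = l.1 / b * b + l.1 % b
      rw [Nat.mul_comm (l.1 / b) b]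
      exact (Nat.div_add_mod _ _).symm
    have R₂' : IsRankLt ((a + 1) * b)
        (fun l : Fin ((a + 1) * b) =>
          A ⟨l.1 / b, pf₂ l⟩ ⊔ B (q.succAbove ⟨l.1 % b, Nat.mod_lt _ (pfb l)⟩))
        (fun x => Qz (x + y)) := isRankLt_translate _ _ y Qz R₂
    have hex₂ : ∀ l : Fin ((a + 1) * b), ∃ k : Fin m,
        ((i.succAbove k : Fin (m + 1)) : ℕ) =
          l.1 / b * (b + 1) + (q.succAbove ⟨l.1 % b, Nat.mod_lt _ (pfb l)⟩).1 := by
      intro l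
      have hlt : l.1 / b * (b + 1) + (q.succAbove ⟨l.1 % b, Nat.mod_lt _ (pfb l)⟩).1
          < m + 1 := by
        rw [he]; exact pair_lt (pf₂ l) (Fin.is_lt _)
      have hne : (⟨_, hlt⟩ : Fin (m + 1)) ≠ i := by
        intro heq
        have h5 : l.1 / b * (b + 1) + (q.succAbove ⟨l.1 % b, Nat.mod_lt _ (pfb l)⟩).1
            = p.1 * (b + 1) + q.1 := by
          rw [← hi]; exact congrArg Fin.val heq
        exact Fin.succAbove_ne q _
          (Fin.ext (enc_inj (Fin.is_lt _) q.2 h5).2)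
      obtain ⟨k, hk⟩ := Fin.exists_succAbove_eq hne
      exact ⟨k, by rw [hk]⟩
    choose f₂ hf₂ using hex₂
    have inj₂ : Function.Injective f₂ := by
      intro l l' hll
      have h5 : ((i.succAbove (f₂ l) : Fin (m + 1)) : ℕ) = i.succAbove (f₂ l') := by rw [hll]
      rw [hf₂ l, hf₂ l'] at h5
      obtain ⟨h6, h7⟩ := enc_inj (Fin.is_lt _) (Fin.is_lt _) h5
      have h8 : (⟨l.1 % b, Nat.mod_lt _ (pfb l)⟩ : Fin b) = ⟨l'.1 % b, Nat.mod_lt _ (pfb l')⟩ :=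
        Fin.succAbove_right_injective (Fin.ext h7)
      have h9 : l.1 % b = l'.1 % b := congrArg Fin.val h8
      apply Fin.ext
      calc l.1 = b * (l.1 / b) + l.1 % b := (Nat.div_add_mod _ _).symm
        _ = b * (l'.1 / b) + l'.1 % b := by rw [h6, h9]
        _ = l'.1 := Nat.div_add_mod _ _
    have E₂ : IsRankLt m (fun j => H (i.succAbove j)) (fun x => Qz (x + y)) := by
      apply isRankLt_embed m ((a + 1) * b) _ _ _ f₂ inj₂ ?_ R₂'
      intro l
      show H (i.succAbove (f₂ l)) ≤
        A ⟨l.1 / b, pf₂ l⟩ ⊔ B (q.succAbove ⟨l.1 % b, Nat.mod_lt _ (pfb l)⟩)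
      obtain ⟨p₂, q₂, hk1, hk2⟩ := hH (i.succAbove (f₂ l))
      have h5 : p₂.1 * (b + 1) + q₂.1 =
          l.1 / b * (b + 1) + (q.succAbove ⟨l.1 % b, Nat.mod_lt _ (pfb l)⟩).1 := by
        rw [← hk1]; exact hf₂ l
      obtain ⟨h6, h7⟩ := enc_inj q₂.2 (Fin.is_lt _) h5
      rw [hk2, show p₂ = (⟨l.1 / b, pf₂ l⟩ : Fin (a + 1)) from Fin.ext h6,
        show q₂ = q.succAbove ⟨l.1 % b, Nat.mod_lt _ (pfb l)⟩ from Fin.ext h7]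
    refine ⟨fun x => Py x + Qz (x + y), isRankLt_add m _ _ _ E₁ E₂, fun x => ?_⟩
    show P (x + h) = P x + (Py x + Qz (x + y))
    rw [← hyz, ← add_assoc, hQz, hPy, add_assoc]
termination_by d₁ + d₂
decreasing_by all_goals omega

/-- **Concatenation theorem for low rank functions** (Proposition 1.5): if `P` has rank
`< (H_{1,i})_{1≤i≤d₁}` and rank `< (H_{2,j})_{1≤j≤d₂}`, then `P` has rank
`< (H_{1,i} + H_{2,j})_{1≤i≤d₁,1≤j≤d₂}`, the `d₁·d₂` subgroups `H_{1,i} + H_{2,j}`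
listed in lexicographic order of `(i,j)` (the pair `(i,j)` is encoded as
`k = i·d₂ + j`, i.e. `i = k / d₂`, `j = k % d₂`). -/
theorem concat_low_rank {G K : Type*} [AddCommGroup G] [AddCommGroup K]
    (P : G → K) (d₁ d₂ : ℕ)
    (H₁ : Fin d₁ → AddSubgroup G) (H₂ : Fin d₂ → AddSubgroup G)
    (h₁ : IsRankLt d₁ H₁ P) (h₂ : IsRankLt d₂ H₂ P) :
    IsRankLt (d₁ * d₂)
      (fun k : Fin (d₁ * d₂) =>
        H₁ ⟨k.1 / d₂, Nat.div_lt_of_lt_mul (by rw [Nat.mul_comm d₂ d₁]; exact k.2)⟩ ⊔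
        H₂ ⟨k.1 % d₂, Nat.mod_lt _ (by
          rcases Nat.eq_zero_or_pos d₂ with h | h
          · exact absurd k.2 (by simp [h])
          · exact h)⟩) P := by
  apply concat_aux d₁ d₂ (d₁ * d₂) H₁ H₂ _ P rfl ?_ h₁ h₂
  intro k
  refine ⟨⟨k.1 / d₂, Nat.div_lt_of_lt_mul (by rw [Nat.mul_comm d₂ d₁]; exact k.2)⟩,
    ⟨k.1 % d₂, Nat.mod_lt _ (by
      rcases Nat.eq_zero_or_pos d₂ with h | h
      · exact absurd k.2 (by simp [h])
      · exact h)⟩, ?_, rfl⟩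
  show (k : ℕ) = k.1 / d₂ * d₂ + k.1 % d₂
  rw [Nat.mul_comm (k.1 / d₂) d₂]
  exact (Nat.div_add_mod _ _).symm
end

section
/- Let G be an at most countable additive group, let (X,T) be a G-system with X=(X,ℬ,μ), let H be a subgroup of G, and let f ∈ L²(X). Let ℬ^H denote the σ-algebra of all E ∈ ℬ such that μ(T^h E Δ E) = 0 for every h ∈ H. Then the net Q ↦ 𝔼_{a∈Q} T^a f, indexed by the directed set 𝓕[H], converges in L²(X) norm to the conditional expectation 𝔼(f | ℬ^H). -/
open MeasureTheory

/-- The average `𝔼_{a∈Q} f(a)` of a function over a finite multiset,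
counted with multiplicity. -/
noncomputable def mAvg {α : Type*} (Q : Multiset α) (f : α → ℂ) : ℂ :=
  (Q.map f).sum / (Q.card : ℂ)

/-- The sumset `A + B` of two finite multisets, counted with multiplicity. -/
def msetSum {G : Type*} [AddCommGroup G] (A B : Multiset G) : Multiset G :=
  A.bind fun a => B.map fun b => a + b

/-- The iterated average `𝔼_{h₁∈Q₁,…,h_d∈Q_d} F(h₁,…,h_d)`. -/
noncomputable def multiAvg {G : Type*} :
    {d : ℕ} → (Fin d → Multiset G) → ((Fin d → G) → ℂ) → ℂ
  | 0, _, F => F fun i => i.elim0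
  | _ + 1, Q, F => mAvg (Q 0) fun a => multiAvg (fun i => Q i.succ) fun t => F (Fin.cons a t)

/-- A `G`-system: a probability space with separable `L²`, together with an
action of the additive group `G` by invertible measure-preserving maps. -/
structure GSystem (G : Type*) [AddCommGroup G] (X : Type*) [MeasurableSpace X] where
  μ : Measure X
  isProb : IsProbabilityMeasure μ
  separableL2 : TopologicalSpace.SeparableSpace (Lp ℂ 2 μ)
  T : G → X → X
  measurePreserving : ∀ g : G, MeasurePreserving (T g) μ μ
  T_zero : T 0 = id
  T_add : ∀ g h : G, T (g + h) = T g ∘ T h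

namespace GSystem

variable {G : Type*} [AddCommGroup G] {X : Type*} [MeasurableSpace X]

/-- `T^g f := f ∘ T^{-g}`. -/
def act (sys : GSystem G X) (g : G) (f : X → ℂ) : X → ℂ := fun x => f (sys.T (-g) x)

/-- `Δ_{h,h'} f := (T^h f) ⬝ conj(T^{h'} f)`. -/
def delta (sys : GSystem G X) (h h' : G) (f : X → ℂ) : X → ℂ :=
  fun x => sys.act h f x * star (sys.act h' f x)

/-- The iterated operator `Δ_{h₁,h'₁} ⋯ Δ_{h_d,h'_d}`. -/
def deltaIter (sys : GSystem G X) :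
    {d : ℕ} → (Fin d → G) → (Fin d → G) → (X → ℂ) → (X → ℂ)
  | 0, _, _, f => f
  | _ + 1, h, h', f =>
      sys.deltaIter (fun i => h i.succ) (fun i => h' i.succ) (sys.delta (h 0) (h' 0) f)

/-- The Gowers box seminorm `‖f‖_{□^d_{Q₁,…,Q_d}(X)}`, i.e. the `2^d`-th root of
`𝔼_{h_i,h'_i∈Q_i} ∫ Δ_{h₁,h'₁}⋯Δ_{h_d,h'_d} f dμ`. -/
noncomputable def gowersBox (sys : GSystem G X) {d : ℕ} (Q : Fin d → Multiset G)
    (f : X → ℂ) : ℝ :=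
  (multiAvg Q fun h => multiAvg Q fun h' => ∫ x, sys.deltaIter h h' f x ∂sys.μ).re
    ^ (((2 : ℝ) ^ d)⁻¹)

/-- The Gowers uniformity norm `‖f‖_{U^d_Q(X)} = ‖f‖_{□^d_{Q,…,Q}(X)}`. -/
noncomputable def gowersU (sys : GSystem G X) (d : ℕ) (Q : Multiset G) (f : X → ℂ) : ℝ :=
  sys.gowersBox (fun _ : Fin d => Q) f

end GSystem
section Accessors

variable {G X : Type*} [AddCommGroup G]

/-- The measure of a `G`-system, with the underlying σ-algebra made explicit. -/
noncomputable def GSystem.mu (m0 : MeasurableSpace X) (sys : @GSystem G _ X m0) :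
    @MeasureTheory.Measure X m0 := sys.μ

/-- The shift maps of a `G`-system, with the underlying σ-algebra made explicit. -/
def GSystem.shift (m0 : MeasurableSpace X) (sys : @GSystem G _ X m0) (g : G) : X → X :=
  sys.T g

/-- The Gowers box seminorm, with the underlying σ-algebra made explicit. -/
noncomputable def GSystem.box (m0 : MeasurableSpace X) (sys : @GSystem G _ X m0)
    {d : ℕ} (Q : Fin d → Multiset G) (f : X → ℂ) : ℝ :=
  sys.gowersBox Q f

end Accessors

/-- `Q` is a non-empty finite multiset with all elements in the subgroup `H`,
i.e. `Q ∈ 𝓕[H]`. -/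
def inF {G : Type*} [AddCommGroup G] (H : AddSubgroup G) (Q : Multiset G) : Prop :=
  Q ≠ 0 ∧ ∀ x ∈ Q, x ∈ H

/-- The ordering on `𝓕[H]`: `Q ≤ Q'` iff `Q' = Q + R` for some non-empty finite
multiset `R` in `H`. -/
def Fle {G : Type*} [AddCommGroup G] (H : AddSubgroup G) (Q Q' : Multiset G) : Prop :=
  ∃ R : Multiset G, inF H R ∧ Q' = msetSum Q R

/-- Convergence, to the limit `L`, of a net indexed by the product directed set
`𝓕[H₁] × ⋯ × 𝓕[H_d]`. -/
def BoxTendsto {G : Type*} [AddCommGroup G] {E : Type*} [Norm E] [Sub E] {d : ℕ}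
    (H : Fin d → AddSubgroup G) (val : (Fin d → Multiset G) → E) (L : E) : Prop :=
  ∀ ε : ℝ, 0 < ε → ∃ Q₀ : Fin d → Multiset G, (∀ i, inF (H i) (Q₀ i)) ∧
    ∀ Q : Fin d → Multiset G, (∀ i, inF (H i) (Q i)) → (∀ i, Fle (H i) (Q₀ i) (Q i)) →
      ‖val Q - L‖ ≤ ε

/-- The sub-σ-algebra `Z` is `G`-invariant. -/
def Invariant {G X : Type*} [AddCommGroup G] (m0 : MeasurableSpace X)
    (sys : @GSystem G _ X m0) (Z : MeasurableSpace X) : Prop :=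
  ∀ g : G, ∀ s : Set X, MeasurableSet[Z] s → MeasurableSet[Z] (GSystem.shift m0 sys g ⁻¹' s)

/-- Measurability of a function with respect to a given σ-algebra on `X`. -/
def MeasurableWrt {X : Type*} (Z : MeasurableSpace X) (g : X → ℂ) : Prop :=
  @Measurable X ℂ Z _ g

/-- `f ∈ L^∞(X)`: `f` is measurable and (essentially) bounded. -/
def BddMeas {G X : Type*} [AddCommGroup G] (m0 : MeasurableSpace X)
    (sys : @GSystem G _ X m0) (f : X → ℂ) : Prop :=
  @Measurable X ℂ m0 _ f ∧ ∃ C : ℝ, ∀ᵐ x ∂(GSystem.mu m0 sys), ‖f x‖ ≤ C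

/-- `f` belongs to `L^∞(Z)`: it is a.e. equal to a `Z`-measurable function. -/
def AEIn {X : Type*} {m0 : MeasurableSpace X} (μ : @MeasureTheory.Measure X m0)
    (Z : MeasurableSpace X) (f : X → ℂ) : Prop :=
  ∃ g : X → ℂ, MeasurableWrt Z g ∧ f =ᵐ[μ] g

/-- A `G`-invariant sub-σ-algebra `Z ⊆ ℬ` is characteristic for `□^d_{H₁,…,H_d}` on
`(X,T)`: for every `f ∈ L^∞(X)` the Gowers–Host–Kra seminorm
`‖f‖_{□^d_{H₁,…,H_d}(X)} = lim_{(Q₁,…,Q_d)→(H₁,…,H_d)} ‖f‖_{□^d_{Q₁,…,Q_d}(X)}`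
vanishes if and only if `𝔼(f|Z) = 0`. -/
def IsCharacteristicBox {G X : Type*} [AddCommGroup G] (m0 : MeasurableSpace X)
    (sys : @GSystem G _ X m0) {d : ℕ} (H : Fin d → AddSubgroup G)
    (Z : MeasurableSpace X) : Prop :=
  Z ≤ m0 ∧ Invariant m0 sys Z ∧
    ∀ f : X → ℂ, BddMeas m0 sys f →
      (BoxTendsto H (fun Q => GSystem.box m0 sys Q f) (0 : ℝ) ↔
        MeasureTheory.condExp Z (GSystem.mu m0 sys) f =ᵐ[GSystem.mu m0 sys] 0)
namespace MET

variable {G : Type*} [AddCommGroup G] {X : Type*} {m0 : MeasurableSpace X}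

noncomputable def U (sys : GSystem G X) (a : G) : Lp ℂ 2 sys.μ →ₗᵢ[ℂ] Lp ℂ 2 sys.μ :=
  Lp.compMeasurePreservingₗᵢ ℂ (sys.T (-a)) (sys.measurePreserving (-a))

theorem U_coe (sys : GSystem G X) (a : G) (g : Lp ℂ 2 sys.μ) :
    ⇑(U sys a g) =ᵐ[sys.μ] fun x => g (sys.T (-a) x) :=
  Lp.coeFn_compMeasurePreserving g _

theorem comp_ae (sys : GSystem G X) (b : G) {g g' : X → ℂ} (h : g =ᵐ[sys.μ] g') :
    (fun x => g (sys.T b x)) =ᵐ[sys.μ] fun x => g' (sys.T b x) :=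
  (sys.measurePreserving b).quasiMeasurePreserving.ae_eq_comp h

theorem U_zero (sys : GSystem G X) (g : Lp ℂ 2 sys.μ) : U sys 0 g = g := by
  refine Lp.ext ((U_coe sys 0 g).trans ?_)
  simp [sys.T_zero]

theorem U_add (sys : GSystem G X) (a b : G) (g : Lp ℂ 2 sys.μ) :
    U sys (a + b) g = U sys a (U sys b g) := by
  apply Lp.ext
  calc ⇑(U sys (a+b) g) =ᵐ[sys.μ] fun x => g (sys.T (-(a+b)) x) := U_coe _ _ _
    _ = fun x => g (sys.T (-b) (sys.T (-a) x)) := by rw [neg_add_rev, sys.T_add]; rfl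
    _ =ᵐ[sys.μ] fun x => (U sys b g) (sys.T (-a) x) := (comp_ae sys (-a) (U_coe sys b g)).symm
    _ =ᵐ[sys.μ] ⇑(U sys a (U sys b g)) := (U_coe _ _ _).symm


noncomputable def A (sys : GSystem G X) (Q : Multiset G) (g : Lp ℂ 2 sys.μ) : Lp ℂ 2 sys.μ :=
  ((Q.card : ℂ))⁻¹ • (Q.map fun a => U sys a g).sum

theorem smul_msum {E : Type*} [AddCommMonoid E] [Module ℂ E] {ι : Type*} (c : ℂ)
    (s : Multiset ι) (F : ι → E) :
    c • (s.map F).sum = (s.map fun i => c • F i).sum := by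
  induction s using Multiset.induction with
  | empty => simp
  | cons a s ih => simp [smul_add, ih]

theorem A_norm_le (sys : GSystem G X) {Q : Multiset G} (hQ : Q ≠ 0) (g : Lp ℂ 2 sys.μ) :
    ‖A sys Q g‖ ≤ ‖g‖ := by
  have hc : (0:ℝ) < Q.card := by
    exact_mod_cast Multiset.card_pos.2 hQ
  have h1 : ‖(Q.map fun a => U sys a g).sum‖ ≤ Q.card * ‖g‖ := by
    refine le_trans (norm_multiset_sum_le _) ?_
    rw [Multiset.map_map]
    have : ((Q.map fun a => ‖U sys a g‖)).sum = ((Q.map fun _ => ‖g‖)).sum := by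
      congr 1
      exact Multiset.map_congr rfl fun a _ => (U sys a).norm_map g
    rw [show ((fun x => ‖x‖) ∘ fun a => U sys a g) = fun a => ‖U sys a g‖ from rfl, this,
      Multiset.map_const', Multiset.sum_replicate, nsmul_eq_mul]
  rw [A, norm_smul]
  have hn : ‖((Q.card : ℂ))⁻¹‖ = ((Q.card : ℝ))⁻¹ := by
    rw [norm_inv]; norm_num
  rw [hn]
  calc ((Q.card : ℝ))⁻¹ * ‖(Q.map fun a => U sys a g).sum‖
      ≤ ((Q.card : ℝ))⁻¹ * (Q.card * ‖g‖) := by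
        exact mul_le_mul_of_nonneg_left h1 (by positivity)
    _ = ‖g‖ := by field_simp

theorem A_add (sys : GSystem G X) (Q : Multiset G) (g g' : Lp ℂ 2 sys.μ) :
    A sys Q (g + g') = A sys Q g + A sys Q g' := by
  rw [A, A, A, ← smul_add]
  congr 1
  rw [show (fun a => U sys a (g + g')) = fun a => U sys a g + U sys a g' by
    funext a; exact map_add _ _ _]
  exact Multiset.sum_map_add

theorem A_smul (sys : GSystem G X) (Q : Multiset G) (c : ℂ) (g : Lp ℂ 2 sys.μ) :
    A sys Q (c • g) = c • A sys Q g := by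
  rw [A, A, smul_comm]
  congr 1
  rw [smul_msum]
  congr 1
  exact Multiset.map_congr rfl fun a _ => map_smul (U sys a) c g

theorem msetSum_card {A B : Multiset G} : (msetSum A B).card = A.card * B.card := by
  simp [msetSum, Multiset.card_bind, Function.comp_def, Multiset.map_const', mul_comm]

theorem msetSum_comm {A B : Multiset G} : msetSum A B = msetSum B A := by
  rw [msetSum, msetSum, Multiset.bind_map_comm]
  congr 1; funext b
  exact Multiset.map_congr rfl fun a _ => add_comm a b

theorem msetSum_assoc {A B C : Multiset G} :
    msetSum (msetSum A B) C = msetSum A (msetSum B C) := by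
  simp only [msetSum, Multiset.map_bind, Multiset.bind_assoc, Multiset.bind_map,
    Multiset.map_map, Function.comp_def, add_assoc]

theorem A_factor (sys : GSystem G X) (Q R : Multiset G) (g : Lp ℂ 2 sys.μ) :
    A sys (msetSum Q R) g = A sys Q (A sys R g) := by
  have hsum : ((msetSum Q R).map fun c => U sys c g).sum
      = (Q.map fun a => U sys a ((R.map fun b => U sys b g).sum)).sum := by
    rw [msetSum, Multiset.map_bind, Multiset.sum_bind]
    congr 1
    refine Multiset.map_congr rfl fun a _ => ?_
    rw [Multiset.map_map]
    rw [show ((fun c => U sys c g) ∘ fun b => a + b) = fun b => U sys a (U sys b g) by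
      funext b; exact U_add sys a b g]
    rw [show (fun b => U sys a (U sys b g)) = (⇑(U sys a) ∘ fun b => U sys b g) from rfl,
      ← Multiset.map_map]
    exact (map_multiset_sum (U sys a).toLinearMap _).symm
  rw [A, A, A, hsum, msetSum_card]
  rw [show (fun a => U sys a (((R.card : ℂ))⁻¹ • ((R.map fun b => U sys b g)).sum))
      = fun a => ((R.card : ℂ))⁻¹ • U sys a (((R.map fun b => U sys b g)).sum) by
    funext a; exact map_smul (U sys a) _ _]
  rw [← smul_msum, smul_smul, ← mul_inv, Nat.cast_mul]

theorem A_invariant (sys : GSystem G X) {Q : Multiset G} (hQ : Q ≠ 0) {g : Lp ℂ 2 sys.μ}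
    (hg : ∀ a ∈ Q, U sys a g = g) : A sys Q g = g := by
  have hc : Q.card ≠ 0 := by simpa [Multiset.card_eq_zero] using hQ
  rw [A, Multiset.map_congr rfl hg, Multiset.map_const', Multiset.sum_replicate,
    ← Nat.cast_smul_eq_nsmul ℂ, smul_smul, inv_mul_cancel₀ (by exact_mod_cast hc), one_smul]

theorem A_coboundary (sys : GSystem G X) (h : G) (u : Lp ℂ 2 sys.μ) (N : ℕ) :
    A sys ((Multiset.range N).map fun k => k • h) (U sys h u - u)
      = ((N : ℂ))⁻¹ • (U sys (N • h) u - u) := by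
  rw [A]
  congr 1
  · simp
  rw [Multiset.map_map]
  have h1 : ∀ k : ℕ, ((fun a => U sys a (U sys h u - u)) ∘ fun k : ℕ => k • h) k
      = U sys ((k+1) • h) u - U sys (k • h) u := by
    intro k
    show U sys (k • h) (U sys h u - u) = _
    rw [map_sub, ← U_add, ← succ_nsmul]
  rw [Multiset.map_congr rfl fun k _ => h1 k]
  have h2 : ((Multiset.range N).map fun k => U sys ((k+1) • h) u - U sys (k • h) u).sum
      = ∑ k ∈ Finset.range N, (U sys ((k+1) • h) u - U sys (k • h) u) := rfl
  rw [h2, Finset.sum_range_sub (fun k => U sys (k • h) u), zero_smul, U_zero]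

def cobSet (sys : GSystem G X) (H : AddSubgroup G) : Set (Lp ℂ 2 sys.μ) :=
  {w | ∃ h ∈ H, ∃ u, w = U sys h u - u}

def inF' {G : Type*} [AddCommGroup G] (H : AddSubgroup G) (Q : Multiset G) : Prop :=
  Q ≠ 0 ∧ ∀ x ∈ Q, x ∈ H

theorem inF'_msetSum {H : AddSubgroup G} {Q R : Multiset G} (hQ : inF' H Q) (hR : inF' H R) :
    inF' H (msetSum Q R) := by
  constructor
  · intro h0
    have := msetSum_card (A := Q) (B := R)
    rw [h0] at this
    simp only [Multiset.card_zero] at this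
    rcases Nat.mul_eq_zero.1 this.symm with h | h
    · exact hQ.1 (Multiset.card_eq_zero.1 h)
    · exact hR.1 (Multiset.card_eq_zero.1 h)
  · intro x hx
    rw [msetSum, Multiset.mem_bind] at hx
    obtain ⟨a, ha, hx⟩ := hx
    rw [Multiset.mem_map] at hx
    obtain ⟨b, hb, rfl⟩ := hx
    exact H.add_mem (hQ.2 a ha) (hR.2 b hb)

theorem small_avg (sys : GSystem G X) (H : AddSubgroup G) {w : Lp ℂ 2 sys.μ}
    (hw : w ∈ Submodule.span ℂ (cobSet sys H)) :
    ∀ ε : ℝ, 0 < ε → ∃ Q₀ : Multiset G, inF' H Q₀ ∧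
      ∀ R : Multiset G, inF' H R → ‖A sys (msetSum Q₀ R) w‖ ≤ ε := by
  induction hw using Submodule.span_induction with
  | mem w hwS =>
    obtain ⟨h, hh, u, rfl⟩ := hwS
    intro ε hε
    set N : ℕ := max 1 ⌈2 * ‖u‖ / ε⌉₊ with hN
    have hN1 : 1 ≤ N := le_max_left _ _
    have hNpos : (0:ℝ) < N := by exact_mod_cast hN1
    have hbound : 2 * ‖u‖ ≤ N * ε := by
      have h1 : 2 * ‖u‖ / ε ≤ (N : ℝ) := by
        refine le_trans (Nat.le_ceil _) ?_
        exact_mod_cast le_max_right 1 _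
      calc 2 * ‖u‖ = 2 * ‖u‖ / ε * ε := by field_simp
        _ ≤ N * ε := by exact mul_le_mul_of_nonneg_right h1 hε.le
    refine ⟨(Multiset.range N).map fun k => k • h, ⟨?_, ?_⟩, ?_⟩
    · simp only [ne_eq, Multiset.map_eq_zero]
      intro hcon
      have : (Multiset.range N).card = 0 := by rw [hcon]; rfl
      rw [Multiset.card_range] at this
      omega
    · intro x hx
      rw [Multiset.mem_map] at hx
      obtain ⟨k, _, rfl⟩ := hx
      exact AddSubgroup.nsmul_mem H hh k
    · intro R hR
      rw [msetSum_comm, A_factor]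
      refine le_trans (A_norm_le sys hR.1 _) ?_
      rw [A_coboundary, norm_smul, norm_inv]
      have : ‖U sys (N • h) u - u‖ ≤ 2 * ‖u‖ := by
        refine le_trans (norm_sub_le _ _) ?_
        rw [(U sys (N • h)).norm_map]; ring_nf; rfl
      calc ‖((N:ℂ))‖⁻¹ * ‖U sys (N • h) u - u‖ = (N:ℝ)⁻¹ * ‖U sys (N • h) u - u‖ := by
            norm_num
        _ ≤ (N:ℝ)⁻¹ * (2 * ‖u‖) := by
            exact mul_le_mul_of_nonneg_left this (by positivity)
        _ ≤ (N:ℝ)⁻¹ * (N * ε) := mul_le_mul_of_nonneg_left hbound (by positivity)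
        _ = ε := by field_simp
  | zero =>
    intro ε hε
    refine ⟨{0}, ⟨by simp, fun x hx => by rw [Multiset.mem_singleton] at hx; rw [hx]; exact H.zero_mem⟩, fun R hR => ?_⟩
    have : A sys (msetSum {0} R) 0 = 0 := by
      rw [A]
      rw [Multiset.map_congr rfl fun a _ => map_zero (U sys a), Multiset.map_const',
        Multiset.sum_replicate, smul_zero, smul_zero]
    rw [this, norm_zero]
    exact hε.le
  | add x y hx hy ihx ihy =>
    intro ε hε
    obtain ⟨Q₁, hQ₁, hb₁⟩ := ihx (ε/2) (by positivity)
    obtain ⟨Q₂, hQ₂, hb₂⟩ := ihy (ε/2) (by positivity)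
    refine ⟨msetSum Q₁ Q₂, inF'_msetSum hQ₁ hQ₂, fun R hR => ?_⟩
    rw [A_add]
    refine le_trans (norm_add_le _ _) ?_
    have e1 : msetSum (msetSum Q₁ Q₂) R = msetSum Q₁ (msetSum Q₂ R) := msetSum_assoc
    have e2 : msetSum (msetSum Q₁ Q₂) R = msetSum Q₂ (msetSum Q₁ R) := by
      rw [show msetSum Q₁ Q₂ = msetSum Q₂ Q₁ from msetSum_comm, msetSum_assoc]
    have b1 : ‖A sys (msetSum (msetSum Q₁ Q₂) R) x‖ ≤ ε/2 := by
      rw [e1]; exact hb₁ _ (inF'_msetSum hQ₂ hR)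
    have b2 : ‖A sys (msetSum (msetSum Q₁ Q₂) R) y‖ ≤ ε/2 := by
      rw [e2]; exact hb₂ _ (inF'_msetSum hQ₁ hR)
    linarith
  | smul c x hx ih =>
    intro ε hε
    obtain ⟨Q₀, hQ₀, hb⟩ := ih (ε / (‖c‖ + 1)) (by positivity)
    refine ⟨Q₀, hQ₀, fun R hR => ?_⟩
    rw [A_smul, norm_smul]
    calc ‖c‖ * ‖A sys (msetSum Q₀ R) x‖ ≤ ‖c‖ * (ε / (‖c‖ + 1)) := by
          exact mul_le_mul_of_nonneg_left (hb R hR) (norm_nonneg c)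
      _ ≤ (‖c‖ + 1) * (ε / (‖c‖ + 1)) := by
          refine mul_le_mul_of_nonneg_right (by linarith) (by positivity)
      _ = ε := by field_simp

local notation "⟪" x ", " y "⟫" => @inner ℂ _ _ x y

noncomputable def V (sys : GSystem G X) (H : AddSubgroup G) : Submodule ℂ (Lp ℂ 2 sys.μ) where
  carrier := {g | ∀ h ∈ H, U sys h g = g}
  add_mem' := by
    intro a b ha hb h hh
    rw [map_add, ha h hh, hb h hh]
  zero_mem' := fun h _ => map_zero _
  smul_mem' := by
    intro c g hg h hh
    rw [_root_.map_smul, hg h hh]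

theorem isClosed_V (sys : GSystem G X) (H : AddSubgroup G) :
    IsClosed ((V sys H : Submodule ℂ (Lp ℂ 2 sys.μ)) : Set (Lp ℂ 2 sys.μ)) := by
  have : ((V sys H : Submodule ℂ (Lp ℂ 2 sys.μ)) : Set (Lp ℂ 2 sys.μ))
      = ⋂ h ∈ (H : Set G), {g | U sys h g = g} := by
    ext g
    simp only [SetLike.mem_coe, Set.mem_iInter, Set.mem_setOf_eq]
    rfl
  rw [this]
  exact isClosed_biInter fun h _ => isClosed_eq (U sys h).continuous continuous_id

theorem U_inv (sys : GSystem G X) (h : G) (g : Lp ℂ 2 sys.μ) :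
    U sys h (U sys (-h) g) = g := by
  rw [← U_add, add_neg_cancel, U_zero]

theorem orth_le_V (sys : GSystem G X) (H : AddSubgroup G) :
    (Submodule.span ℂ (cobSet sys H))ᗮ ≤ V sys H := by
  intro g hg h hh
  have key : ∀ u : Lp ℂ 2 sys.μ, ⟪U sys h u, g⟫ = ⟪u, g⟫ := by
    intro u
    have h0 : ⟪U sys h u - u, g⟫ = (0:ℂ) :=
      hg _ (Submodule.subset_span ⟨h, hh, u, rfl⟩)
    rw [inner_sub_left, sub_eq_zero] at h0
    exact h0
  have h2 : U sys (-h) g = g := by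
    rw [← sub_eq_zero, ← inner_self_eq_zero (𝕜 := ℂ)]
    rw [inner_sub_right, sub_eq_zero]
    set v := U sys (-h) g - g
    calc ⟪v, U sys (-h) g⟫ = ⟪U sys h v, U sys h (U sys (-h) g)⟫ :=
          ((U sys h).inner_map_map v _).symm
      _ = ⟪U sys h v, g⟫ := by rw [U_inv]
      _ = ⟪v, g⟫ := key v
  conv_lhs => rw [← h2]
  rw [U_inv]

theorem coe_msum (sys : GSystem G X) (Q : Multiset G) (F : G → Lp ℂ 2 sys.μ) :
    ⇑((Q.map F).sum) =ᵐ[sys.μ] fun x => (Q.map fun a => F a x).sum := by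
  induction Q using Multiset.induction with
  | empty =>
    simp only [Multiset.map_zero, Multiset.sum_zero]
    exact Lp.coeFn_zero _ _ _
  | cons a s ih =>
    rw [Multiset.map_cons, Multiset.sum_cons]
    filter_upwards [Lp.coeFn_add (F a) ((s.map F).sum), ih] with x h1 h2
    rw [h1]
    simp only [Multiset.map_cons, Multiset.sum_cons, Pi.add_apply]
    rw [h2]

theorem A_coe (sys : GSystem G X) (Q : Multiset G) {f : X → ℂ} (hf : MemLp f 2 sys.μ) :
    ⇑(A sys Q (hf.toLp f)) =ᵐ[sys.μ] fun x => mAvg Q fun a => f (sys.T (-a) x) := by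
  classical
  have hall : ∀ᵐ x ∂sys.μ, ∀ a ∈ (Q.toFinset : Set G), (U sys a (hf.toLp f)) x = f (sys.T (-a) x) := by
    rw [MeasureTheory.ae_ball_iff Q.toFinset.countable_toSet]
    intro a _
    exact (U_coe sys a _).trans (comp_ae sys (-a) hf.coeFn_toLp)
  filter_upwards [Lp.coeFn_smul ((Q.card : ℂ))⁻¹ ((Q.map fun a => U sys a (hf.toLp f)).sum),
    coe_msum sys Q (fun a => U sys a (hf.toLp f)), hall] with x h1 h2 h3
  show (((Q.card : ℂ))⁻¹ • ((Q.map fun a => U sys a (hf.toLp f)).sum) : Lp ℂ 2 sys.μ) x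
      = mAvg Q fun a => f (sys.T (-a) x)
  rw [h1]
  simp only [Pi.smul_apply, smul_eq_mul]
  rw [h2, mAvg, div_eq_inv_mul]
  congr 2
  exact Multiset.map_congr rfl fun a ha => h3 a (Finset.mem_coe.2 (Multiset.mem_toFinset.2 ha))

end MET
namespace MET
section
variable {G : Type*} [AddCommGroup G] {X : Type*}

local notation "⟪" x ", " y "⟫" => @inner ℂ _ _ x y

theorem coe_ae_condExp (m : MeasurableSpace X) {m0 : MeasurableSpace X}
    (sys : GSystem G X) (H : AddSubgroup G)
    (hm : ∀ s : Set X, MeasurableSet[m] s ↔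
      (MeasurableSet[m0] s ∧ ∀ h ∈ H, sys.μ (symmDiff (sys.T h ⁻¹' s) s) = 0))
    {f : X → ℂ} (hf : MemLp f 2 sys.μ)
    {p : Lp ℂ 2 sys.μ} (hpV : p ∈ V sys H)
    (horth : ∀ u ∈ V sys H, ⟪u, hf.toLp f - p⟫ = (0:ℂ)) :
    ⇑p =ᵐ[sys.μ] MeasureTheory.condExp m sys.μ f := by
  haveI := sys.isProb
  have hle : m ≤ m0 := fun s hs => ((hm s).1 hs).1
  haveI : IsFiniteMeasure (sys.μ.trim hle) := isFiniteMeasure_trim hle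
  have key : ∀ s : Set X, MeasurableSet[m] s →
      ∫ x in s, p x ∂sys.μ = ∫ x in s, f x ∂sys.μ := by
    intro s hs
    have hs0 : MeasurableSet[m0] s := hle s hs
    have hμs : sys.μ s ≠ ⊤ := measure_ne_top _ _
    set ind : Lp ℂ 2 sys.μ := indicatorConstLp 2 hs0 hμs (1:ℂ) with hind
    have hindV : ind ∈ V sys H := by
      intro h hh
      apply Lp.ext
      have hnull : sys.μ (symmDiff (sys.T (-h) ⁻¹' s) s) = 0 :=
        ((hm s).1 hs).2 (-h) (H.neg_mem hh)
      have hset : ∀ᵐ x ∂sys.μ, Set.indicator (sys.T (-h) ⁻¹' s) (fun _ => (1:ℂ)) x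
          = Set.indicator s (fun _ => (1:ℂ)) x := by
        rw [ae_iff]
        refine measure_mono_null ?_ hnull
        intro x hx
        simp only [Set.mem_setOf_eq] at hx
        by_contra hns
        apply hx
        rw [Set.mem_symmDiff] at hns
        push_neg at hns
        by_cases h1 : x ∈ s
        · rw [Set.indicator_of_mem (hns.2 h1), Set.indicator_of_mem h1]
        · have h2 : x ∉ sys.T (-h) ⁻¹' s := fun hA => h1 (hns.1 hA)
          rw [Set.indicator_of_notMem h2, Set.indicator_of_notMem h1]
      calc ⇑(U sys h ind) =ᵐ[sys.μ] fun x => ind (sys.T (-h) x) := U_coe _ _ _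
        _ =ᵐ[sys.μ] fun x => Set.indicator s (fun _ => (1:ℂ)) (sys.T (-h) x) :=
            comp_ae sys (-h) indicatorConstLp_coeFn
        _ = fun x => Set.indicator (sys.T (-h) ⁻¹' s) (fun _ => (1:ℂ)) x := by
            funext x
            by_cases hx : sys.T (-h) x ∈ s
            · rw [Set.indicator_of_mem hx, Set.indicator_of_mem (Set.mem_preimage.2 hx)]
            · rw [Set.indicator_of_notMem hx,
                Set.indicator_of_notMem (fun hc => hx (Set.mem_preimage.1 hc))]
        _ =ᵐ[sys.μ] fun x => Set.indicator s (fun _ => (1:ℂ)) x := hset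
        _ =ᵐ[sys.μ] ⇑ind := indicatorConstLp_coeFn.symm
    have h0 : ⟪ind, hf.toLp f - p⟫ = (0:ℂ) := horth ind hindV
    rw [inner_sub_right, sub_eq_zero] at h0
    have h1 : (⟪ind, hf.toLp f⟫ : ℂ) = ∫ x in s, f x ∂sys.μ := by
      rw [hind, MeasureTheory.L2.inner_indicatorConstLp_eq_setIntegral_inner ℂ]
      simp only [RCLike.inner_apply, map_one, one_mul, mul_one]
      refine setIntegral_congr_ae hs0 ?_
      filter_upwards [hf.coeFn_toLp] with x hx _
      exact hx
    have h2 : (⟪ind, p⟫ : ℂ) = ∫ x in s, p x ∂sys.μ := by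
      rw [hind, MeasureTheory.L2.inner_indicatorConstLp_eq_setIntegral_inner ℂ]
      simp only [RCLike.inner_apply, map_one, one_mul, mul_one]
    rw [← h1, ← h2, h0]
  refine ae_eq_condExp_of_forall_setIntegral_eq hle (hf.integrable one_le_two)
    (fun s _ _ => ((Lp.memLp p).integrable one_le_two).integrableOn)
    (fun s hs _ => key s hs) ?_
  have hpm : @Measurable X ℂ m _ ⇑p := by
    intro t ht
    have hsm := (Lp.stronglyMeasurable p).measurable
    rw [hm]
    refine ⟨hsm ht, ?_⟩
    intro h hh
    have hae : (fun x => p (sys.T h x)) =ᵐ[sys.μ] ⇑p := by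
      have h1 : U sys (-h) p = p := hpV (-h) (H.neg_mem hh)
      calc (fun x => p (sys.T h x)) = fun x => p (sys.T (- -h) x) := by rw [neg_neg]
        _ =ᵐ[sys.μ] ⇑(U sys (-h) p) := (U_coe sys (-h) p).symm
        _ = ⇑p := by rw [h1]
    have hzero : sys.μ {x | ¬ p (sys.T h x) = p x} = 0 := ae_iff.mp hae
    refine measure_mono_null ?_ hzero
    intro x hx
    rw [Set.mem_symmDiff] at hx
    simp only [Set.mem_setOf_eq]
    intro heq
    rcases hx with ⟨hx1, hx2⟩ | ⟨hx1, hx2⟩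
    · refine hx2 ?_
      simp only [Set.mem_preimage] at hx1 ⊢
      rwa [← heq]
    · refine hx2 ?_
      simp only [Set.mem_preimage] at hx1 ⊢
      rwa [heq]
  exact ⟨⇑p, hpm.stronglyMeasurable, Filter.EventuallyEq.rfl⟩

end

end MET

namespace MET
theorem main {G : Type*} [AddCommGroup G] {X : Type*} (m : MeasurableSpace X)
    {m0 : MeasurableSpace X} (sys : GSystem G X) (H : AddSubgroup G)
    (f : X → ℂ) (hf : MeasureTheory.MemLp f 2 sys.μ)
    (hm : ∀ s : Set X, MeasurableSet[m] s ↔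
      (MeasurableSet[m0] s ∧
        ∀ h ∈ H, sys.μ (symmDiff (sys.T h ⁻¹' s) s) = 0)) :
    ∀ ε : ℝ, 0 < ε → ∃ Q₀ : Multiset G, inF H Q₀ ∧
      ∀ Q : Multiset G, inF H Q → Fle H Q₀ Q →
        MeasureTheory.eLpNorm
          (fun x => mAvg Q (fun a => f (sys.T (-a) x)) -
            MeasureTheory.condExp m sys.μ f x) 2 sys.μ
          ≤ ENNReal.ofReal ε := by
  intro ε hε
  haveI := sys.isProb
  have hf' : MeasureTheory.MemLp f 2 sys.μ := hf
  haveI : CompleteSpace (MET.V sys H) := (MET.isClosed_V sys H).completeSpace_coe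
  set fh : Lp ℂ 2 sys.μ := hf'.toLp f with hfh
  set p : Lp ℂ 2 sys.μ := ((MET.V sys H).orthogonalProjectionOnto fh : Lp ℂ 2 sys.μ) with hp
  have hpV : p ∈ MET.V sys H := SetLike.coe_mem _
  have horthmem : fh - p ∈ (MET.V sys H)ᗮ := Submodule.sub_starProjection_mem_orthogonal (K := MET.V sys H) fh
  have horth : ∀ u ∈ MET.V sys H, (inner ℂ u (fh - p) : ℂ) = 0 :=
    (Submodule.mem_orthogonal (MET.V sys H) (fh - p)).1 horthmem
  have hcond : ⇑p =ᵐ[sys.μ] MeasureTheory.condExp m sys.μ f :=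
    MET.coe_ae_condExp m sys H hm hf' hpV horth
  have hW : fh - p ∈ (Submodule.span ℂ (MET.cobSet sys H)).topologicalClosure := by
    have h1 := Submodule.orthogonal_le (MET.orth_le_V sys H)
    rw [Submodule.orthogonal_orthogonal_eq_closure] at h1
    exact h1 horthmem
  have hclos : (fh - p) ∈
      closure ((Submodule.span ℂ (MET.cobSet sys H) : Submodule ℂ _) : Set _) := hW
  obtain ⟨w, hwmem, hdist⟩ := Metric.mem_closure_iff.1 hclos (ε/2) (by positivity)
  obtain ⟨Q₀, hQ₀, hsmall⟩ := MET.small_avg sys H hwmem (ε/2) (by positivity)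
  refine ⟨Q₀, hQ₀, ?_⟩
  intro Q hQ hle'
  obtain ⟨R, hR, hQeq⟩ := hle'
  have hAp : MET.A sys Q p = p := MET.A_invariant sys hQ.1 (fun a ha => hpV a (hQ.2 a ha))
  have hsplit : MET.A sys Q fh - p = MET.A sys Q (fh - p - w) + MET.A sys Q w := by
    have habel : fh = (fh - p - w) + w + p := by abel
    calc MET.A sys Q fh - p = MET.A sys Q ((fh - p - w) + w + p) - p := by rw [← habel]
      _ = MET.A sys Q (fh - p - w) + MET.A sys Q w + MET.A sys Q p - p := by
          rw [MET.A_add, MET.A_add]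
      _ = _ := by rw [hAp]; abel
  have hnorm : ‖MET.A sys Q fh - p‖ ≤ ε := by
    rw [hsplit]
    have b1 : ‖MET.A sys Q (fh - p - w)‖ ≤ ε/2 := by
      refine le_trans (MET.A_norm_le sys hQ.1 _) ?_
      rw [show fh - p - w = (fh - p) - w from rfl, ← dist_eq_norm]
      exact hdist.le
    have b2 : ‖MET.A sys Q w‖ ≤ ε/2 := by rw [hQeq]; exact hsmall R hR
    calc ‖MET.A sys Q (fh - p - w) + MET.A sys Q w‖
        ≤ ‖MET.A sys Q (fh - p - w)‖ + ‖MET.A sys Q w‖ := norm_add_le _ _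
      _ ≤ ε := by linarith
  have haediff : (fun x => mAvg Q (fun a => f (sys.T (-a) x)) -
      MeasureTheory.condExp m (sys.μ) f x)
      =ᵐ[sys.μ] ⇑(MET.A sys Q fh - p) := by
    filter_upwards [MET.A_coe sys Q hf', hcond, Lp.coeFn_sub (MET.A sys Q fh) p]
      with x h1 h2 h3
    rw [h3]
    simp only [Pi.sub_apply]
    rw [h1, ← h2]
  show MeasureTheory.eLpNorm _ 2 sys.μ ≤ ENNReal.ofReal ε
  rw [MeasureTheory.eLpNorm_congr_ae haediff]
  have hfin : MeasureTheory.eLpNorm (⇑(MET.A sys Q fh - p)) 2 sys.μ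
      = ENNReal.ofReal ‖MET.A sys Q fh - p‖ := by
    rw [Lp.norm_def, ENNReal.ofReal_toReal (Lp.eLpNorm_ne_top _)]
  rw [hfin]
  exact ENNReal.ofReal_le_ofReal hnorm

end MET

/-- **Mean ergodic theorem** (the identity (2.6)): for `f ∈ L²(X)`, the averages
`𝔼_{a∈Q} T^a f` converge, along the directed set `𝓕[H]` of non-empty finite multisets
in `H`, in `L²(X)` norm to the conditional expectation `𝔼(f | ℬ^H)` relative to the
σ-algebra `ℬ^H` of sets `E ∈ ℬ` with `μ(T^h E Δ E) = 0` for all `h ∈ H`. -/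
theorem mean_ergodic_theorem {G : Type*} [AddCommGroup G] [Countable G]
    {X : Type*} [m0 : MeasurableSpace X] (sys : @GSystem G _ X m0)
    (H : AddSubgroup G)
    (f : X → ℂ) (hf : MeasureTheory.MemLp f 2 (GSystem.mu m0 sys))
    (m : MeasurableSpace X)
    (hm : ∀ s : Set X, MeasurableSet[m] s ↔
      (MeasurableSet[m0] s ∧
        ∀ h ∈ H, GSystem.mu m0 sys (symmDiff (GSystem.shift m0 sys h ⁻¹' s) s) = 0)) :
    ∀ ε : ℝ, 0 < ε → ∃ Q₀ : Multiset G, inF H Q₀ ∧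
      ∀ Q : Multiset G, inF H Q → Fle H Q₀ Q →
        MeasureTheory.eLpNorm
          (fun x => mAvg Q (fun a => f (GSystem.shift m0 sys (-a) x)) -
            MeasureTheory.condExp m (GSystem.mu m0 sys) f x) 2 (GSystem.mu m0 sys)
          ≤ ENNReal.ofReal ε :=
  MET.main m sys H f hf hm
end
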